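/- Let ε > 0, let v, F : [0,∞) × ℝ² → ℝ² be continuous and ℤ²-periodic in the space variable with F bounded, and let w : [0,∞) × ℝ² → ℝ² be ℤ²-periodic in the space variable, continuous on [0,∞) × ℝ², C¹ in time and C² in space on (0,∞) × ℝ², satisfying ∂ₜw − ε²Δw = −2(v·w)v − |v|²w + F on (0,∞) × ℝ² and w(0,·) = 0. Then for every t ≥ 0, sup_{x∈ℝ²} |w(t,x)| ≤ ∫₀ᵗ sup_{x∈ℝ²} |F(s,x)| ds. -/

import Mathlib

open MeasureTheory Real Set Filter

noncomputable section

/-- The plane ℝ² with its Euclidean norm. -/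
abbrev E2 := EuclideanSpace ℝ (Fin 2)

/-- An integer vector in ℝ². -/
def intVec (k : Fin 2 → ℤ) : E2 := WithLp.toLp 2 (fun i => (k i : ℝ))

/-- Componentwise Laplacian of a map `f : ℝ² → ℝ²`. -/
def lap (f : E2 → E2) (x : E2) : E2 :=
  ∑ i : Fin 2, fderiv ℝ (fun y => fderiv ℝ f y (EuclideanSpace.single i 1)) x
    (EuclideanSpace.single i 1)

/-- Solution of the Ginzburg-Landau heat flow `∂ₜ u = ε² Δu + (1-|u|²)u`, `u(0,·) = u₀`,
ℤ²-periodic in space, continuous on `[0,∞) × ℝ²`, C² in space and differentiable in time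
on `(0,∞) × ℝ²`. -/
structure IsGLSolution (eps : ℝ) (u0 : E2 → E2) (u : ℝ → E2 → E2) : Prop where
  periodic : ∀ t x k, u t (x + intVec k) = u t x
  cont : ContinuousOn (fun p : ℝ × E2 => u p.1 p.2) (Set.Ici 0 ×ˢ Set.univ)
  space_smooth : ∀ t > (0:ℝ), ContDiff ℝ 2 (u t)
  pde : ∀ t > (0:ℝ), ∀ x, HasDerivAt (fun s => u s x)
    (eps ^ 2 • lap (u t) x + (1 - ‖u t x‖ ^ 2) • u t x) t
  init : ∀ x, u 0 x = u0 x

/-- The unit square `[0,1)²`. -/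
def unitBox : Set E2 := {x | ∀ i, x i ∈ Set.Ico (0:ℝ) 1}

section
open Topology
namespace MaxPrinAux

/-- the closed unit square -/
def K : Set E2 := {x | ∀ i, x i ∈ Set.Icc (0:ℝ) 1}

lemma hK_ne : K.Nonempty := ⟨0, fun i => by simp [Set.mem_Icc]⟩

lemma hK_compact : IsCompact K := by
  have hclosed : IsClosed K := by
    have : K = ⋂ i, (fun x : E2 => x i) ⁻¹' Set.Icc (0:ℝ) 1 := by
      ext x; simp [K, Set.mem_iInter]
    rw [this]
    exact isClosed_iInter fun i =>
      IsClosed.preimage (EuclideanSpace.proj (𝕜 := ℝ) i).continuous isClosed_Icc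
  have hbdd : Bornology.IsBounded K := by
    rw [Metric.isBounded_iff_subset_closedBall 0]
    refine ⟨2, fun x hx => ?_⟩
    simp only [Metric.mem_closedBall, dist_zero_right]
    have : ‖x‖ ^ 2 ≤ 2 ^ 2 := by
      rw [EuclideanSpace.norm_eq]
      rw [Real.sq_sqrt (by positivity)]
      have : ∀ i : Fin 2, ‖x i‖ ^ 2 ≤ 1 := by
        intro i
        have h := hx i
        rw [Real.norm_eq_abs, sq_abs]
        nlinarith [h.1, h.2]
      calc (∑ i : Fin 2, ‖x i‖ ^ 2) ≤ ∑ i : Fin 2, (1:ℝ) :=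
            Finset.sum_le_sum fun i _ => this i
        _ ≤ 2 ^ 2 := by simp; norm_num
    nlinarith [norm_nonneg x]
  exact Metric.isCompact_of_isClosed_isBounded hclosed hbdd

lemma reduce (x : E2) : ∃ y ∈ K, ∃ k, x = y + intVec k := by
  refine ⟨x - intVec (fun i => ⌊x i⌋), fun i => ?_, fun i => ⌊x i⌋, by abel⟩
  have : (x - intVec fun i => ⌊x i⌋) i = x i - ⌊x i⌋ := by
    simp [intVec]
  rw [this]
  constructor
  · have := Int.fract_nonneg (x i); rwa [Int.fract] at this
  · have := (Int.fract_lt_one (x i)).le; rwa [Int.fract] at this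

variable {f : ℝ → E2 → E2}

lemma slice_cont (hf : ContinuousOn (fun p : ℝ × E2 => f p.1 p.2) (Set.Ici 0 ×ˢ Set.univ))
    {t : ℝ} (ht : 0 ≤ t) : Continuous (f t) := by
  rw [← continuousOn_univ]
  exact hf.comp ((continuous_const.prodMk continuous_id).continuousOn)
    (fun x _ => ⟨ht, trivial⟩)

lemma range_norm_eq (q : E2 → E2) (hper : ∀ x k, q (x + intVec k) = q x) :
    Set.range (fun x => ‖q x‖) = (fun x => ‖q x‖) '' K := by
  apply Set.Subset.antisymm
  · rintro _ ⟨x, rfl⟩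
    obtain ⟨y, hy, k, hk⟩ := reduce x
    exact ⟨y, hy, by simp only; rw [hk, hper]⟩
  · exact Set.image_subset_range _ _

/-- sup over K, as a function of time -/
def supK (f : ℝ → E2 → E2) (t : ℝ) : ℝ := sSup ((fun x => ‖f t x‖) '' K)

lemma bddA {q : E2 → E2} (hq : Continuous q) : BddAbove ((fun x => ‖q x‖) '' K) :=
  (hK_compact.image hq.norm).bddAbove

lemma le_supK (hf : ContinuousOn (fun p : ℝ × E2 => f p.1 p.2) (Set.Ici 0 ×ˢ Set.univ))
    (hper : ∀ t x k, f t (x + intVec k) = f t x) {t : ℝ} (ht : 0 ≤ t) (x : E2) :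
    ‖f t x‖ ≤ supK f t := by
  have hx : ‖f t x‖ ∈ (fun x => ‖f t x‖) '' K := by
    rw [← range_norm_eq (f t) (hper t)]; exact ⟨x, rfl⟩
  exact le_csSup (bddA (slice_cont hf ht)) hx

lemma supK_nonneg (hf : ContinuousOn (fun p : ℝ × E2 => f p.1 p.2) (Set.Ici 0 ×ˢ Set.univ))
    (hper : ∀ t x k, f t (x + intVec k) = f t x) {t : ℝ} (ht : 0 ≤ t) :
    0 ≤ supK f t := le_trans (norm_nonneg _) (le_supK hf hper ht 0)

lemma iSup_eq_supK (hf : ContinuousOn (fun p : ℝ × E2 => f p.1 p.2) (Set.Ici 0 ×ˢ Set.univ))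
    (hper : ∀ t x k, f t (x + intVec k) = f t x) {t : ℝ} (ht : 0 ≤ t) :
    (⨆ x, ‖f t x‖) = supK f t := by
  rw [iSup, supK, range_norm_eq (f t) (hper t)]

lemma supK_cont (hf : ContinuousOn (fun p : ℝ × E2 => f p.1 p.2) (Set.Ici 0 ×ˢ Set.univ))
    (hper : ∀ t x k, f t (x + intVec k) = f t x) :
    ContinuousOn (supK f) (Set.Ici 0) := by
  intro t₀ ht₀
  rw [Metric.continuousWithinAt_iff]
  intro ε hε
  set C : Set (ℝ × E2) := (Set.Icc (t₀ - 1) (t₀ + 1) ∩ Set.Ici 0) ×ˢ K with hC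
  have hCc : IsCompact C := (isCompact_Icc.inter_right isClosed_Ici).prod hK_compact
  have hcont : ContinuousOn (fun p : ℝ × E2 => ‖f p.1 p.2‖) C := by
    apply hf.norm.mono
    rintro ⟨s, x⟩ ⟨hs, _⟩
    exact ⟨hs.2, trivial⟩
  have hUC := hCc.uniformContinuousOn_of_continuous hcont
  rw [Metric.uniformContinuousOn_iff] at hUC
  obtain ⟨δ, hδ, hδ'⟩ := hUC (ε/2) (by linarith)
  refine ⟨min δ 1, by positivity, fun {t} ht hdist => ?_⟩
  have hdt : dist t t₀ < δ := lt_of_lt_of_le hdist (min_le_left _ _)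
  have hdt1 : dist t t₀ < 1 := lt_of_lt_of_le hdist (min_le_right _ _)
  rw [Real.dist_eq] at hdt1
  have habs := abs_lt.mp hdt1
  have hmem : ∀ x ∈ K, ((t, x) : ℝ × E2) ∈ C ∧ ((t₀, x) : ℝ × E2) ∈ C := by
    intro x hx
    refine ⟨⟨⟨⟨by linarith [habs.1], by linarith [habs.2]⟩, ht⟩, hx⟩,
      ⟨⟨⟨by linarith, by linarith⟩, ht₀⟩, hx⟩⟩
  have hptwise : ∀ x ∈ K, |‖f t x‖ - ‖f t₀ x‖| < ε/2 := by
    intro x hx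
    have := hδ' (t, x) (hmem x hx).1 (t₀, x) (hmem x hx).2
      (by rw [Prod.dist_eq]; simp only [dist_self]; exact max_lt hdt hδ)
    rwa [Real.dist_eq] at this
  have h1 : supK f t ≤ supK f t₀ + ε/2 := by
    apply Real.sSup_le
    · rintro _ ⟨x, hx, rfl⟩
      have := (abs_lt.mp (hptwise x hx)).2
      have h2 : ‖f t₀ x‖ ≤ supK f t₀ := le_supK hf hper ht₀ x
      linarith
    · linarith [supK_nonneg hf hper ht₀]
  have h2 : supK f t₀ ≤ supK f t + ε/2 := by
    apply Real.sSup_le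
    · rintro _ ⟨x, hx, rfl⟩
      have := (abs_lt.mp (hptwise x hx)).1
      have h2 : ‖f t x‖ ≤ supK f t := le_supK hf hper ht x
      linarith
    · linarith [supK_nonneg hf hper ht]
  rw [Real.dist_eq, abs_lt]
  constructor <;> linarith

/-- if `φ` has a global max at `0` and `φ'` is its derivative with `φ'` differentiable at `0`,
then the second derivative of `φ` at `0` is nonpositive. -/
lemma sd_nonpos {φ φ' : ℝ → ℝ} {d : ℝ} (h1 : ∀ r, HasDerivAt φ (φ' r) r)
    (h2 : HasDerivAt φ' d 0) (hmax : ∀ r, φ r ≤ φ 0) : d ≤ 0 := by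
  by_contra hcon
  push_neg at hcon
  have h0 : φ' 0 = 0 :=
    IsLocalMax.hasDerivAt_eq_zero (Filter.Eventually.of_forall hmax) (h1 0)
  have hslope : Tendsto (slope φ' 0) (𝓝[≠] (0:ℝ)) (𝓝 d) :=
    hasDerivAt_iff_tendsto_slope.mp h2
  have hev : ∀ᶠ r in 𝓝[≠] (0:ℝ), 0 < slope φ' 0 r :=
    hslope (Ioi_mem_nhds hcon)
  rw [eventually_nhdsWithin_iff] at hev
  obtain ⟨η, hη, hball⟩ := Metric.eventually_nhds_iff.mp hev
  have hpos : ∀ r ∈ Set.Ioo (0:ℝ) η, 0 < φ' r := by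
    intro r hr
    have hsl : 0 < slope φ' 0 r := by
      apply hball (y := r) _ (ne_of_gt hr.1)
      rw [Real.dist_eq, sub_zero, abs_of_pos hr.1]; exact hr.2
    rw [slope_def_field, h0, sub_zero, sub_zero, div_pos_iff] at hsl
    rcases hsl with ⟨h, _⟩ | ⟨_, h⟩
    · exact h
    · linarith [hr.1]
  have hmono : StrictMonoOn φ (Set.Icc 0 η) := by
    apply strictMonoOn_of_deriv_pos (convex_Icc 0 η)
    · exact fun x _ => ((h1 x).continuousAt).continuousWithinAt
    · intro x hx
      rw [interior_Icc] at hx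
      rw [(h1 x).deriv]
      exact hpos x hx
  have := hmono (Set.left_mem_Icc.2 hη.le) (Set.right_mem_Icc.2 hη.le) hη
  linarith [hmax η]

lemma lap_inner_nonpos {u : E2 → E2} (hu : ContDiff ℝ 2 u) {x₀ : E2}
    (hm : ∀ y, ‖u y‖ ≤ ‖u x₀‖) :
    (inner ℝ (u x₀) (lap u x₀) : ℝ) ≤ 0 := by
  have hud : Differentiable ℝ u := hu.differentiable (by norm_num)
  have hu1 : ContDiff ℝ 1 (fun y => fderiv ℝ u y) := hu.fderiv_right (by norm_num)
  rw [lap, inner_sum]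
  apply Finset.sum_nonpos
  intro i _
  set e : E2 := EuclideanSpace.single i 1 with he
  set u' : E2 → E2 := fun y => fderiv ℝ u y e with hu'def
  have hu'1 : ContDiff ℝ 1 u' := hu1.clm_apply contDiff_const
  have hu'd : Differentiable ℝ u' := hu'1.differentiable one_ne_zero
  set c : ℝ → E2 := fun r => x₀ + r • e with hc
  have hc0 : c 0 = x₀ := by simp [hc]
  have hcd : ∀ r, HasDerivAt c e r := by
    intro r
    have h' : HasDerivAt (fun r : ℝ => r • e) ((1:ℝ) • e) r := (hasDerivAt_id r).smul_const e
    exact (by simpa using h' : HasDerivAt (fun r : ℝ => r • e) e r).const_add x₀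
  have hdriv : ∀ r, HasDerivAt (fun s => u (c s)) (u' (c r)) r := fun r =>
    (hud (c r)).hasFDerivAt.comp_hasDerivAt r (hcd r)
  have hdriv' : HasDerivAt (fun s => u' (c s)) (fderiv ℝ u' x₀ e) 0 := by
    have h := (hu'd (c 0)).hasFDerivAt.comp_hasDerivAt 0 (hcd 0)
    rwa [hc0] at h
  set A : E2 := fderiv ℝ u' x₀ e with hA
  set φ : ℝ → ℝ := fun r => (inner ℝ (u (c r)) (u (c r)) : ℝ) with hφ
  set φ' : ℝ → ℝ := fun r => 2 * (inner ℝ (u (c r)) (u' (c r)) : ℝ) with hφ'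
  have h1 : ∀ r, HasDerivAt φ (φ' r) r := by
    intro r
    have h := (hdriv r).inner ℝ (hdriv r)
    have heq : (inner ℝ (u (c r)) (u' (c r)) : ℝ) + inner ℝ (u' (c r)) (u (c r)) = φ' r := by
      have hcm := real_inner_comm (u' (c r)) (u (c r))
      simp only [hφ']; linarith
    rw [heq] at h
    exact h
  have h2 : HasDerivAt φ' (2 * ((inner ℝ (u (c 0)) A : ℝ) + inner ℝ (u' (c 0)) (u' (c 0)))) 0 := by
    have h := ((hdriv 0).inner ℝ hdriv').const_mul 2
    exact h
  have hmax : ∀ r, φ r ≤ φ 0 := by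
    intro r
    simp only [hφ, real_inner_self_eq_norm_sq, hc0]
    exact pow_le_pow_left₀ (norm_nonneg _) (hm (c r)) 2
  have hd := sd_nonpos h1 h2 hmax
  rw [hc0] at hd
  have hself : (0:ℝ) ≤ inner ℝ (u' x₀) (u' x₀) := real_inner_self_nonneg
  have : (inner ℝ (u x₀) A : ℝ) ≤ 0 := by nlinarith
  exact this

end MaxPrinAux
end

open MaxPrinAux Topology in
set_option maxHeartbeats 1000000 in
/-- Lemma 2.1, maximum principle: if `w` solves
`∂ₜw - ε²Δw = -2(v·w)v - |v|²w + F` with `w(0,·) = 0`, then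
`‖w(t)‖_∞ ≤ ∫₀ᵗ ‖F(s)‖_∞ ds`. -/
theorem max_principle_bound (eps : ℝ) (heps : 0 < eps) (v F w : ℝ → E2 → E2)
    (hvcont : ContinuousOn (fun p : ℝ × E2 => v p.1 p.2) (Set.Ici 0 ×ˢ Set.univ))
    (hvper : ∀ t x k, v t (x + intVec k) = v t x)
    (hFcont : ContinuousOn (fun p : ℝ × E2 => F p.1 p.2) (Set.Ici 0 ×ˢ Set.univ))
    (hFper : ∀ t x k, F t (x + intVec k) = F t x)
    (hFbdd : ∃ B, ∀ t ≥ (0:ℝ), ∀ x, ‖F t x‖ ≤ B)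
    (hwper : ∀ t x k, w t (x + intVec k) = w t x)
    (hwcont : ContinuousOn (fun p : ℝ × E2 => w p.1 p.2) (Set.Ici 0 ×ˢ Set.univ))
    (hwspace : ∀ t > (0:ℝ), ContDiff ℝ 2 (w t))
    (hpde : ∀ t > (0:ℝ), ∀ x, HasDerivAt (fun s => w s x)
      (eps ^ 2 • lap (w t) x +
        (-(2 * (inner ℝ (v t x) (w t x) : ℝ)) • v t x
          - ‖v t x‖ ^ 2 • w t x + F t x)) t)
    (hinit : ∀ x, w 0 x = 0) :
    ∀ t ≥ (0:ℝ), (⨆ x, ‖w t x‖) ≤ ∫ s in (0:ℝ)..t, ⨆ x, ‖F s x‖ := by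
  intro t ht
  rcases eq_or_lt_of_le ht with h0 | h0
  · rw [← h0]
    have h1 : (⨆ x, ‖w 0 x‖) = 0 := by
      have he : (fun x : E2 => ‖w 0 x‖) = fun _ => 0 := funext fun x => by rw [hinit]; simp
      rw [he, ciSup_const]
    rw [h1, intervalIntegral.integral_same]
  · set gW : ℝ → ℝ := supK w with hgW
    set hFn : ℝ → ℝ := supK F with hhFn
    have hgc : ContinuousOn gW (Set.Ici 0) := supK_cont hwcont hwper
    have hhc : ContinuousOn hFn (Set.Ici 0) := supK_cont hFcont hFper
    have hh0 : ∀ s, 0 ≤ s → 0 ≤ hFn s := fun s hs => supK_nonneg hFcont hFper hs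
    rw [iSup_eq_supK hwcont hwper ht]
    have hEq : Set.EqOn (fun s => ⨆ x, ‖F s x‖) hFn (Set.uIcc 0 t) := by
      intro s hs
      rw [Set.uIcc_of_le ht] at hs
      exact iSup_eq_supK hFcont hFper hs.1
    rw [show (∫ s in (0:ℝ)..t, ⨆ x, ‖F s x‖) = ∫ s in (0:ℝ)..t, hFn s from
      intervalIntegral.integral_congr hEq]
    have hint : ∀ a : ℝ, 0 ≤ a → IntervalIntegrable hFn volume 0 a := by
      intro a ha
      apply ContinuousOn.intervalIntegrable
      apply hhc.mono
      rw [Set.uIcc_of_le ha]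
      exact fun s hs => hs.1
    have key : ∀ δ > (0:ℝ), gW t ≤ (∫ s in (0:ℝ)..t, hFn s) + δ * (t + 1) := by
      intro δ hδ
      set ψ : ℝ → ℝ := fun s => (∫ r in (0:ℝ)..s, hFn r) + δ * s + δ with hψ
      by_contra hcon
      push_neg at hcon
      have hψt : ψ t ≤ gW t := by simp only [hψ]; linarith
      set S : Set ℝ := {s ∈ Set.Icc 0 t | ψ s ≤ gW s} with hS
      have htS : t ∈ S := ⟨⟨ht, le_rfl⟩, hψt⟩
      have hSne : S.Nonempty := ⟨t, htS⟩
      have hSbdd : BddBelow S := ⟨0, fun s hs => hs.1.1⟩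
      set t₀ : ℝ := sInf S with ht₀
      have ht₀mem : t₀ ∈ Set.Icc 0 t :=
        ⟨le_csInf hSne fun s hs => hs.1.1, csInf_le hSbdd htS⟩
      have hψcont : ContinuousOn ψ (Set.Icc 0 t) := by
        have hic : ContinuousOn (fun s => ∫ r in (0:ℝ)..s, hFn r) (Set.Icc 0 t) := by
          have := intervalIntegral.continuousOn_primitive_interval (a := 0) (b := t)
            (f := hFn) (μ := volume) ?_
          · rwa [Set.uIcc_of_le ht] at this
          · rw [Set.uIcc_of_le ht]
            exact (hhc.mono (fun s (hs : s ∈ Set.Icc 0 t) => hs.1)).integrableOn_Icc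
        exact (hic.add (continuous_const.mul continuous_id).continuousOn).add
          continuousOn_const
      have hSt₀ : ψ t₀ ≤ gW t₀ := by
        have hcl : t₀ ∈ closure S := csInf_mem_closure hSne hSbdd
        have hne : (𝓝[S] t₀).NeBot := mem_closure_iff_nhdsWithin_neBot.mp hcl
        have htd : Tendsto (fun s => gW s - ψ s) (𝓝[S] t₀) (𝓝 (gW t₀ - ψ t₀)) :=
          (((hgc.mono Set.Icc_subset_Ici_self).sub hψcont) t₀ ht₀mem).mono
            (fun s hs => hs.1)
        have hev : ∀ᶠ s in 𝓝[S] t₀, 0 ≤ gW s - ψ s :=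
          eventually_nhdsWithin_of_forall (fun s hs => sub_nonneg.2 hs.2)
        linarith [ge_of_tendsto htd hev]
      have ht₀pos : 0 < t₀ := by
        rcases lt_or_eq_of_le ht₀mem.1 with hp | hp
        · exact hp
        · exfalso
          have hg0 : gW 0 = 0 := by
            have himg : (fun x : E2 => ‖w 0 x‖) '' K = {0} := by
              rw [show (fun x : E2 => ‖w 0 x‖) = fun _ => 0 from
                funext fun x => by rw [hinit]; simp]
              exact Set.Nonempty.image_const hK_ne 0
            simp only [hgW, supK, himg, csSup_singleton]
          have hψ0 : ψ 0 = δ := by simp [hψ]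
          rw [← hp, hg0, hψ0] at hSt₀
          linarith
      have hlt : ∀ s, 0 ≤ s → s < t₀ → gW s < ψ s := by
        intro s hs hst
        have hsmem : s ∈ Set.Icc 0 t := ⟨hs, le_trans hst.le ht₀mem.2⟩
        have hns : s ∉ S := notMem_of_lt_csInf hst hSbdd
        simp only [hS, Set.mem_sep_iff] at hns
        push_neg at hns
        exact hns hsmem
      obtain ⟨x₀, hx₀K, hx₀max⟩ := hK_compact.exists_isMaxOn hK_ne
        ((slice_cont hwcont ht₀mem.1).norm.continuousOn)
      have hgt₀ : gW t₀ = ‖w t₀ x₀‖ := by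
        apply le_antisymm
        · exact Real.sSup_le (by rintro _ ⟨x, hx, rfl⟩; exact hx₀max hx) (norm_nonneg _)
        · exact le_supK hwcont hwper ht₀mem.1 x₀
      have hglobal : ∀ y, ‖w t₀ y‖ ≤ ‖w t₀ x₀‖ := by
        intro y
        obtain ⟨z, hz, k, hk⟩ := reduce y
        rw [hk, hwper]
        exact hx₀max hz
      have hlap := lap_inner_nonpos (hwspace t₀ ht₀pos) hglobal
      have hW := hpde t₀ ht₀pos x₀
      set W : E2 := eps ^ 2 • lap (w t₀) x₀ +
        (-(2 * (inner ℝ (v t₀ x₀) (w t₀ x₀) : ℝ)) • v t₀ x₀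
          - ‖v t₀ x₀‖ ^ 2 • w t₀ x₀ + F t₀ x₀) with hWdef
      have hβ : HasDerivAt (fun s => (inner ℝ (w s x₀) (w s x₀) : ℝ))
          ((inner ℝ (w t₀ x₀) W : ℝ) + (inner ℝ W (w t₀ x₀) : ℝ)) t₀ := hW.inner ℝ hW
      have hψ' : HasDerivAt ψ (hFn t₀ + δ) t₀ := by
        have hi : HasDerivAt (fun s => ∫ r in (0:ℝ)..s, hFn r) (hFn t₀) t₀ := by
          apply intervalIntegral.integral_hasDerivAt_right (hint t₀ ht₀mem.1)
          · exact ContinuousOn.stronglyMeasurableAtFilter isOpen_Ioi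
              (hhc.mono (fun s (hs : s ∈ Set.Ioi 0) => hs.le)) t₀ (Set.mem_Ioi.mpr ht₀pos)
          · exact (hhc t₀ ht₀pos.le).continuousAt (Ici_mem_nhds ht₀pos)
        have h2 : HasDerivAt (fun s : ℝ => δ * s + δ) δ t₀ := by
          simpa using ((hasDerivAt_id t₀).const_mul δ).add_const δ
        have h3 := hi.add h2
        have h4 : ψ = fun s => (∫ r in (0:ℝ)..s, hFn r) + (δ * s + δ) := by
          funext s; simp only [hψ]; ring
        rw [h4]
        exact h3
      have hψeq : ψ t₀ = gW t₀ := by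
        apply le_antisymm hSt₀
        have hcl : t₀ ∈ closure (Set.Ioo 0 t₀) := by
          rw [closure_Ioo (ne_of_lt ht₀pos)]
          exact Set.right_mem_Icc.2 ht₀pos.le
        have hne : (𝓝[Set.Ioo 0 t₀] t₀).NeBot := mem_closure_iff_nhdsWithin_neBot.mp hcl
        have hsub : Set.Ioo 0 t₀ ⊆ Set.Icc 0 t :=
          fun s hs => ⟨hs.1.le, le_trans hs.2.le ht₀mem.2⟩
        have htd : Tendsto (fun s => ψ s - gW s) (𝓝[Set.Ioo 0 t₀] t₀) (𝓝 (ψ t₀ - gW t₀)) :=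
          ((hψcont.sub (hgc.mono Set.Icc_subset_Ici_self)) t₀ ht₀mem).mono hsub
        have hev : ∀ᶠ s in 𝓝[Set.Ioo 0 t₀] t₀, 0 ≤ ψ s - gW s :=
          eventually_nhdsWithin_of_forall fun s hs =>
            sub_nonneg.2 (hlt s hs.1.le hs.2).le
        linarith [ge_of_tendsto htd hev]
      have hwnorm : ‖w t₀ x₀‖ = ψ t₀ := by rw [hψeq, hgt₀]
      have hψδ : δ ≤ ψ t₀ := by
        have hintpos : 0 ≤ ∫ r in (0:ℝ)..t₀, hFn r :=
          intervalIntegral.integral_nonneg ht₀mem.1 (fun u hu => hh0 u hu.1)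
        simp only [hψ]
        nlinarith [ht₀pos]
      -- the function β - ψ² and its derivative
      have hsq := hψ'.pow 2
      have hf0 := hβ.sub hsq
      set D : ℝ := ((inner ℝ (w t₀ x₀) W : ℝ) + (inner ℝ W (w t₀ x₀) : ℝ)) -
        2 * ψ t₀ ^ 1 * (hFn t₀ + δ) with hD
      have hf0' : HasDerivAt (fun s => (inner ℝ (w s x₀) (w s x₀) : ℝ) - ψ s ^ 2) D t₀ := by
        have hsq2 : HasDerivAt (fun s => ψ s ^ 2) (2 * ψ t₀ ^ 1 * (hFn t₀ + δ)) t₀ :=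
          (hψ'.pow 2).congr_deriv (by norm_num)
        exact hβ.sub hsq2

      have hf0t₀ : (inner ℝ (w t₀ x₀) (w t₀ x₀) : ℝ) - ψ t₀ ^ 2 = 0 := by
        rw [real_inner_self_eq_norm_sq, hwnorm]; ring
      have hDpos : 0 ≤ D := by
        have hsl := hasDerivAt_iff_tendsto_slope.mp hf0'
        have hmono' : 𝓝[Set.Ioo 0 t₀] t₀ ≤ 𝓝[≠] t₀ :=
          nhdsWithin_mono _ (fun s hs => ne_of_lt hs.2)
        have hcl : t₀ ∈ closure (Set.Ioo 0 t₀) := by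
          rw [closure_Ioo (ne_of_lt ht₀pos)]
          exact Set.right_mem_Icc.2 ht₀pos.le
        have hne : (𝓝[Set.Ioo 0 t₀] t₀).NeBot := mem_closure_iff_nhdsWithin_neBot.mp hcl
        apply ge_of_tendsto (hsl.mono_left hmono')
        apply eventually_nhdsWithin_of_forall
        intro s hs
        have hbs : (inner ℝ (w s x₀) (w s x₀) : ℝ) ≤ gW s ^ 2 := by
          rw [real_inner_self_eq_norm_sq]
          exact pow_le_pow_left₀ (norm_nonneg _) (le_supK hwcont hwper hs.1.le x₀) 2
        have hgs : gW s < ψ s := hlt s hs.1.le hs.2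
        have hg0' : 0 ≤ gW s := supK_nonneg hwcont hwper hs.1.le
        have hf0s : (inner ℝ (w s x₀) (w s x₀) : ℝ) - ψ s ^ 2 ≤ 0 := by nlinarith
        rw [slope_def_field, hf0t₀, sub_zero]
        exact div_nonneg_iff.mpr (Or.inr ⟨hf0s, by linarith [hs.2]⟩)
      -- inner product estimate
      have hFbound : ‖F t₀ x₀‖ ≤ hFn t₀ := le_supK hFcont hFper ht₀mem.1 x₀
      have hinner : (inner ℝ (w t₀ x₀) W : ℝ) ≤ ψ t₀ * hFn t₀ := by
        rw [hWdef, inner_add_right, inner_add_right, inner_sub_right,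
          real_inner_smul_right, real_inner_smul_right, real_inner_smul_right]
        have h1 : eps ^ 2 * (inner ℝ (w t₀ x₀) (lap (w t₀) x₀) : ℝ) ≤ 0 :=
          mul_nonpos_of_nonneg_of_nonpos (sq_nonneg eps) hlap
        have h2 : (inner ℝ (w t₀ x₀) (v t₀ x₀) : ℝ) = inner ℝ (v t₀ x₀) (w t₀ x₀) :=
          real_inner_comm _ _
        have h3 : (0:ℝ) ≤ inner ℝ (w t₀ x₀) (w t₀ x₀) := real_inner_self_nonneg
        have h4 : (inner ℝ (w t₀ x₀) (F t₀ x₀) : ℝ) ≤ ‖w t₀ x₀‖ * ‖F t₀ x₀‖ :=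
          real_inner_le_norm _ _
        have h5 : ‖w t₀ x₀‖ * ‖F t₀ x₀‖ ≤ ψ t₀ * hFn t₀ := by
          rw [hwnorm]
          apply mul_le_mul le_rfl hFbound (norm_nonneg _) (by linarith)
        rw [h2]
        nlinarith [sq_nonneg (inner ℝ (v t₀ x₀) (w t₀ x₀) : ℝ), sq_nonneg ‖v t₀ x₀‖,
          mul_nonneg (sq_nonneg ‖v t₀ x₀‖) h3]
      have hcomm : (inner ℝ W (w t₀ x₀) : ℝ) = inner ℝ (w t₀ x₀) W := real_inner_comm _ _
      rw [hD, hcomm, pow_one] at hDpos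
      have hp : 0 < ψ t₀ := lt_of_lt_of_le hδ hψδ
      have hexp : 2 * ψ t₀ * (hFn t₀ + δ) =
          2 * (ψ t₀ * hFn t₀) + 2 * (ψ t₀ * δ) := by ring
      linarith [hDpos, hinner, hexp, mul_pos hp hδ]
    apply le_of_forall_pos_le_add
    intro ε hε
    have hδ : 0 < ε / (t + 1) := by positivity
    have hcancel : ε / (t + 1) * (t + 1) = ε := div_mul_cancel₀ _ (by linarith)
    linarith [key _ hδ]
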